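/- Let 0<α<2 and ω > 2α/(2−α). With h̃₁(t) = (1/2)(1 + ω + sqrt((1+ω)² − 8αt²)) and h₂(t) = ωt/((α+2)t − 2), for every t > 2(1+ω)/(2+α) one has d/dt [h̃₁(h₂(t))] < 2α/((2−α)ω) < 1. -/

import Mathlib

theorem stmt_14 (α ω : ℝ) (hα : 0 < α) (hα2 : α < 2) (hω : 2 * α / (2 - α) < ω) :
    let h₁ : ℝ → ℝ := fun t => 1 / 2 * (1 + ω + Real.sqrt ((1 + ω) ^ 2 - 8 * α * t ^ 2))
    let h₂ : ℝ → ℝ := fun t => ω * t / ((α + 2) * t - 2)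
    ∀ t : ℝ, 2 * (1 + ω) / (2 + α) < t →
      deriv (fun s => h₁ (h₂ s)) t < 2 * α / ((2 - α) * ω) ∧
      2 * α / ((2 - α) * ω) < 1 := by
  intro h₁ h₂ t ht
  have h2α : (0:ℝ) < 2 - α := by linarith
  have hω0 : 0 < ω := lt_trans (by positivity) hω
  have hαω : 2 * α < (2 - α) * ω := by
    rw [div_lt_iff₀ h2α] at hω; linarith
  refine ⟨?_, by rw [div_lt_one (by positivity)]; linarith⟩
  have h2a : (0:ℝ) < 2 + α := by linarith
  have ht' : 2 * (1 + ω) < t * (2 + α) := (div_lt_iff₀ h2a).mp ht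
  have ht0 : 0 < t := by nlinarith
  have hd0 : 0 < (α + 2) * t - 2 := by nlinarith
  have hd2ω : 2 * ω < (α + 2) * t - 2 := by nlinarith
  set d := (α + 2) * t - 2 with hd_def
  set u := ω * t / d with hu_def
  have hu0 : 0 < u := by positivity
  have hu1 : u * (2 + α) < 1 + ω := by
    rw [hu_def, div_mul_eq_mul_div, div_lt_iff₀ hd0]
    rw [hd_def]; nlinarith
  set D := (1 + ω) ^ 2 - 8 * α * u ^ 2 with hD_def
  have hu2 : (u * (2 + α)) ^ 2 < (1 + ω) ^ 2 := by nlinarith [mul_pos hu0 h2a]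
  have hD1 : u ^ 2 * (2 - α) ^ 2 < D := by nlinarith [sq_nonneg u]
  have hD0 : 0 < D := by nlinarith
  have hsq : u * (2 - α) < Real.sqrt D := by
    have h := (Real.sqrt_sq (show (0:ℝ) ≤ u * (2 - α) by positivity)).symm
    rw [h]
    exact Real.sqrt_lt_sqrt (by positivity) (by nlinarith)
  have hsq0 : 0 < Real.sqrt D := lt_of_le_of_lt (by positivity) hsq
  have hder : HasDerivAt (fun s => h₁ (h₂ s)) (8 * α * ω * u / (d ^ 2 * Real.sqrt D)) t := by
    simp only [h₁, h₂]
    have hg : HasDerivAt (fun s => ω * s / ((α + 2) * s - 2)) (-(2 * ω) / d ^ 2) t := by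
      have h1 : HasDerivAt (fun s : ℝ => ω * s) ω t := by
        simpa using (hasDerivAt_id t).const_mul ω
      have h2 : HasDerivAt (fun s : ℝ => (α + 2) * s - 2) (α + 2) t := by
        simpa using ((hasDerivAt_id t).const_mul (α + 2)).sub_const 2
      have h3 := h1.div h2 (ne_of_gt hd0)
      refine h3.congr_deriv ?_
      rw [hd_def]
      field_simp
      ring
    have hgin : HasDerivAt (fun s => (1 + ω) ^ 2 - 8 * α * (ω * s / ((α + 2) * s - 2)) ^ 2)
        (32 * α * ω * u / d ^ 2) t := by
      have h4 := ((hg.pow 2).const_mul (8 * α)).const_sub ((1 + ω) ^ 2)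
      refine h4.congr_deriv ?_
      push_cast
      rw [show ω * t / ((α + 2) * t - 2) = u from rfl]
      ring
    have hDrfl : (1 + ω) ^ 2 - 8 * α * (ω * t / ((α + 2) * t - 2)) ^ 2 = D := rfl
    have hsqrt : HasDerivAt
        (fun s => Real.sqrt ((1 + ω) ^ 2 - 8 * α * (ω * s / ((α + 2) * s - 2)) ^ 2))
        (32 * α * ω * u / d ^ 2 / (2 * Real.sqrt D)) t := by
      have h5 := (Real.hasDerivAt_sqrt
        (x := (1 + ω) ^ 2 - 8 * α * (ω * t / ((α + 2) * t - 2)) ^ 2)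
        (by rw [hDrfl]; exact hD0.ne')).comp t hgin
      refine h5.congr_deriv ?_
      rw [hDrfl]; ring
    have h6 := (hsqrt.const_add (1 + ω)).const_mul (1 / 2 : ℝ)
    refine h6.congr_deriv ?_
    field_simp
    ring
  rw [hder.deriv]
  have key : 4 * ω ^ 2 * (u * (2 - α)) < d ^ 2 * Real.sqrt D := by
    have h1 : (2 * ω) ^ 2 < d ^ 2 := by nlinarith
    have := mul_lt_mul'' h1 hsq (by positivity) (by positivity)
    nlinarith
  calc 8 * α * ω * u / (d ^ 2 * Real.sqrt D)
      < 8 * α * ω * u / (4 * ω ^ 2 * (u * (2 - α))) :=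
        div_lt_div_of_pos_left (by positivity) (by positivity) key
    _ = 2 * α / ((2 - α) * ω) := by field_simp; ring
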